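/- Let n ≥ 2, k > 0, c > 0, ω_f > 0, let h₁ ∈ ℝⁿ be nonzero with ĥ₁ := h₁/‖h₁‖, let H be a symmetric positive definite real n×n matrix, and take α = 1, so M := k(Iₙ − ĥ₁ ĥ₁ᵀ) and c̃ := c/‖h₁‖². Let U be any real orthogonal n×n matrix with Uᵀ(ĥ₁ĥ₁ᵀ)U = diag(1,0,…,0), set H̃ := UᵀHU and let H̃₂₂ be the lower-right (n−1)×(n−1) block of H̃. Then the multiset of complex eigenvalues of Z := ω_f M H + ω_f c̃ h₁ h₁ᵀ equals {ω_f c} together with the eigenvalues of ω_f k H̃₂₂; moreover H̃₂₂ is symmetric positive definite. -/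

import Mathlib

noncomputable section
open Matrix Polynomial

/-- The multiset of complex eigenvalues (roots of the characteristic polynomial over `ℂ`,
with multiplicity) of a real matrix. -/
def eigMultiset {m : Type} [Fintype m] [DecidableEq m] (A : Matrix m m ℝ) : Multiset ℂ :=
  ((A.charpoly).map (algebraMap ℝ ℂ)).roots

/-- The normalized vector `ĥ₁ = h₁/‖h₁‖`. -/
def hhat (n : ℕ) (h₁ : Fin n → ℝ) : Fin n → ℝ := (Real.sqrt (h₁ ⬝ᵥ h₁))⁻¹ • h₁

theorem charpoly_conj_orth {n : Type} [Fintype n] [DecidableEq n] (A U : Matrix n n ℝ)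
    (hU : Uᵀ * U = 1) : (Uᵀ * A * U).charpoly = A.charpoly := by
  have hU' : U * Uᵀ = 1 := mul_eq_one_comm.mp hU
  have h1 : charmatrix (Uᵀ * A * U) = (Uᵀ).map C * charmatrix A * U.map C := by
    rw [charmatrix, charmatrix, Matrix.mul_sub, Matrix.sub_mul]
    congr 1
    · rw [scalar_apply, ← Matrix.smul_one_eq_diagonal, mul_smul_comm, smul_mul_assoc, mul_one,
        ← Matrix.map_mul, hU, Matrix.map_one _ (map_zero C) (map_one C)]
    · rw [RingHom.mapMatrix_apply, RingHom.mapMatrix_apply, Matrix.map_mul, Matrix.map_mul]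
  rw [Matrix.charpoly, h1, det_mul, det_mul, mul_comm, ← mul_assoc, ← det_mul, ← Matrix.map_mul,
    hU', Matrix.map_one _ (map_zero C) (map_one C), det_one, one_mul, Matrix.charpoly]

theorem charpoly_row_zero (m : ℕ) (a : ℝ) (B : Matrix (Fin (m+1)) (Fin (m+1)) ℝ)
    (h0 : ∀ j, B 0 j = if j = 0 then a else 0) :
    B.charpoly = (X - C a) * (B.submatrix Fin.succ Fin.succ).charpoly := by
  have hminor : (charmatrix B).submatrix Fin.succ ((0 : Fin (m+1)).succAbove)
      = charmatrix (B.submatrix Fin.succ Fin.succ) := by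
    ext i j
    simp only [submatrix_apply, Fin.succAbove_zero, charmatrix_apply, diagonal_apply,
      Fin.succ_inj, submatrix_apply]
  rw [Matrix.charpoly, det_succ_row_zero, Finset.sum_eq_single 0]
  · rw [hminor]
    simp only [Fin.val_zero, pow_zero, one_mul, charmatrix_apply_eq, h0]
    simp [Matrix.charpoly]
  · intro j _ hj
    have : charmatrix B 0 j = 0 := by
      rw [charmatrix_apply_ne _ _ _ (Ne.symm hj), h0, if_neg hj, map_zero, neg_zero]
    simp [this]
  · simp

/-- Case `α = 1` (`n = m+1 ≥ 2`): with `M = k(I − ĥ₁ĥ₁ᵀ)`, `c̃ = c/‖h₁‖²`, and `U`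
orthogonal diagonalizing `ĥ₁ĥ₁ᵀ` to `diag(1,0,…,0)`, the multiset of complex
eigenvalues of `Z = ω_f M H + ω_f c̃ h₁h₁ᵀ` is `{ω_f c}` together with the eigenvalues
of `ω_f k H̃₂₂`, where `H̃₂₂` is the lower-right block of `H̃ = UᵀHU`; moreover
`H̃₂₂` is symmetric positive definite. -/
theorem stmt6 (m : ℕ) (hm : 1 ≤ m) (k c ωf : ℝ)
    (hk : 0 < k) (hc : 0 < c) (hωf : 0 < ωf)
    (h₁ : Fin (m + 1) → ℝ) (hh₁ : h₁ ≠ 0)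
    (H : Matrix (Fin (m + 1)) (Fin (m + 1)) ℝ) (hH : H.PosDef)
    (U : Matrix (Fin (m + 1)) (Fin (m + 1)) ℝ) (hU : Uᵀ * U = 1)
    (hUdiag : Uᵀ * Matrix.vecMulVec (hhat (m + 1) h₁) (hhat (m + 1) h₁) * U =
      Matrix.diagonal fun i => if i = 0 then (1 : ℝ) else 0) :
    eigMultiset
        (ωf • ((k • ((1 : Matrix (Fin (m + 1)) (Fin (m + 1)) ℝ) -
            Matrix.vecMulVec (hhat (m + 1) h₁) (hhat (m + 1) h₁))) * H) +
          (ωf * (c / (h₁ ⬝ᵥ h₁))) • Matrix.vecMulVec h₁ h₁) =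
      ((ωf * c : ℝ) : ℂ) ::ₘ
        eigMultiset ((ωf * k) • Matrix.of fun i j : Fin m => (Uᵀ * H * U) i.succ j.succ) ∧
    (Matrix.of fun i j : Fin m => (Uᵀ * H * U) i.succ j.succ).PosDef := by
  have hU' : U * Uᵀ = 1 := mul_eq_one_comm.mp hU
  set P := Matrix.vecMulVec (hhat (m + 1) h₁) (hhat (m + 1) h₁) with hP
  set D := (Matrix.diagonal fun i : Fin (m+1) => if i = 0 then (1 : ℝ) else 0) with hDdef
  set H' := Uᵀ * H * U with hH'def
  -- basic facts about h₁
  have hs2 : 0 < h₁ ⬝ᵥ h₁ := by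
    rcases (Finset.sum_nonneg fun i _ => mul_self_nonneg (h₁ i)).lt_or_eq with h | h
    · exact h
    · exact absurd (dotProduct_self_eq_zero.mp h.symm) hh₁
  have hs : Real.sqrt (h₁ ⬝ᵥ h₁) ≠ 0 := by positivity
  -- h₁h₁ᵀ = ‖h₁‖² P
  have hvv : Matrix.vecMulVec h₁ h₁ = (h₁ ⬝ᵥ h₁) • P := by
    ext i j
    simp only [hP, vecMulVec_apply, Matrix.smul_apply, hhat, Pi.smul_apply, smul_eq_mul]
    rw [← Real.sqrt_mul_self hs2.le]
    field_simp
    rw [Real.sq_sqrt (Real.sqrt_nonneg _)]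
  -- rewrite Z
  have hZ : (ωf • ((k • ((1 : Matrix (Fin (m + 1)) (Fin (m + 1)) ℝ) - P)) * H) +
      (ωf * (c / (h₁ ⬝ᵥ h₁))) • Matrix.vecMulVec h₁ h₁)
      = (ωf * k) • ((1 - P) * H) + (ωf * c) • P := by
    rw [Matrix.smul_mul, smul_smul, hvv, smul_smul]
    congr 2
    field_simp
  -- conjugated matrix
  have hconj : Uᵀ * ((ωf * k) • ((1 - P) * H) + (ωf * c) • P) * U
      = (ωf * k) • ((1 - D) * H') + (ωf * c) • D := by
    rw [Matrix.mul_add, Matrix.add_mul, Matrix.mul_smul, Matrix.smul_mul,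
      Matrix.mul_smul, Matrix.smul_mul, hUdiag]
    congr 2
    have h1 : Uᵀ * ((1 - P) * H) * U = (Uᵀ * (1 - P) * U) * (Uᵀ * H * U) := by
      simp only [Matrix.mul_assoc]
      rw [← Matrix.mul_assoc U Uᵀ, hU', Matrix.one_mul]
    rw [h1, Matrix.mul_sub, Matrix.sub_mul, Matrix.mul_one, hU, hUdiag, hH'def]
  set B := (ωf * k) • ((1 - D) * H') + (ωf * c) • D with hBdef
  -- diagonal description of 1 - D
  have h1D : (1 : Matrix (Fin (m+1)) (Fin (m+1)) ℝ) - D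
      = Matrix.diagonal fun i => if i = 0 then (0:ℝ) else 1 := by
    ext i j
    by_cases h : i = j
    · subst h
      by_cases h0 : i = 0 <;>
        simp [hDdef, Matrix.sub_apply, Matrix.one_apply, Matrix.diagonal_apply, h0]
    · simp [hDdef, Matrix.sub_apply, Matrix.one_apply, Matrix.diagonal_apply, h]
  -- entries of B
  have hB0 : ∀ j, B 0 j = if j = 0 then ωf * c else 0 := by
    intro j
    simp only [hBdef, h1D, Matrix.add_apply, Matrix.smul_apply, Matrix.diagonal_mul,
      smul_eq_mul, Matrix.diagonal_apply, hDdef]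
    by_cases h : j = 0 <;> simp [h, eq_comm, Matrix.sub_mul, Matrix.diagonal_mul]
  have hBsub : B.submatrix Fin.succ Fin.succ
      = (ωf * k) • Matrix.of fun i j : Fin m => H' i.succ j.succ := by
    ext i j
    simp only [hBdef, h1D, Matrix.submatrix_apply, Matrix.add_apply, Matrix.smul_apply,
      Matrix.diagonal_mul, smul_eq_mul, Matrix.diagonal_apply, hDdef, Matrix.of_apply,
      Fin.succ_ne_zero, if_false]
    by_cases h : (i.succ : Fin (m+1)) = j.succ <;> simp [h, Fin.succ_ne_zero, Matrix.sub_mul, Matrix.diagonal_mul]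
  -- charpoly computation
  have hcp : B.charpoly = (X - C (ωf * c)) *
      ((ωf * k) • Matrix.of fun i j : Fin m => H' i.succ j.succ).charpoly := by
    rw [charpoly_row_zero m (ωf * c) B hB0, hBsub]
  have hchar : (ωf • ((k • ((1 : Matrix (Fin (m + 1)) (Fin (m + 1)) ℝ) - P)) * H) +
      (ωf * (c / (h₁ ⬝ᵥ h₁))) • Matrix.vecMulVec h₁ h₁).charpoly
      = (X - C (ωf * c)) *
        ((ωf * k) • Matrix.of fun i j : Fin m => H' i.succ j.succ).charpoly := by
    rw [hZ, ← charpoly_conj_orth _ U hU, hconj, hcp]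
  constructor
  · -- eigenvalue multiset equality
    have hq : (((ωf * k) • Matrix.of fun i j : Fin m => H' i.succ j.succ).charpoly.map
        (algebraMap ℝ ℂ)) ≠ 0 :=
      ((Matrix.charpoly_monic _).map _).ne_zero
    rw [eigMultiset, hchar, Polynomial.map_mul, Polynomial.map_sub, Polynomial.map_X,
      Polynomial.map_C, Polynomial.roots_mul (mul_ne_zero (X_sub_C_ne_zero _) hq),
      Polynomial.roots_X_sub_C, eigMultiset, Multiset.singleton_add]
    rfl
  · -- positive definiteness of the block
    have hH' : H'.PosDef := by
      rw [Matrix.posDef_iff_dotProduct_mulVec]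
      constructor
      · have hHs : Hᵀ = H := hH.1
        show (Uᵀ * H * U)ᴴ = Uᵀ * H * U
        rw [show (Uᵀ * H * U)ᴴ = (Uᵀ * H * U)ᵀ from rfl]
        rw [Matrix.transpose_mul, Matrix.transpose_mul, Matrix.transpose_transpose, hHs,
          Matrix.mul_assoc]
      · intro x hx
        have hUx : U *ᵥ x ≠ 0 := by
          intro h
          apply hx
          have : Uᵀ *ᵥ (U *ᵥ x) = x := by
            rw [Matrix.mulVec_mulVec, hU, Matrix.one_mulVec]
          rw [h, Matrix.mulVec_zero] at this
          exact this.symm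
        have := hH.dotProduct_mulVec_pos hUx
        simp only [star_trivial] at this ⊢
        calc x ⬝ᵥ ((Uᵀ * H * U) *ᵥ x)
            = x ⬝ᵥ (Uᵀ *ᵥ ((H * U) *ᵥ x)) := by
              rw [Matrix.mulVec_mulVec, Matrix.mul_assoc]
          _ = (U *ᵥ x) ⬝ᵥ ((H * U) *ᵥ x) := by
              rw [Matrix.dotProduct_mulVec, Matrix.vecMul_transpose]
          _ = (U *ᵥ x) ⬝ᵥ (H *ᵥ (U *ᵥ x)) := by rw [Matrix.mulVec_mulVec]
          _ > 0 := this
    rw [Matrix.posDef_iff_dotProduct_mulVec]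
    constructor
    · have := hH'.1.submatrix (Fin.succ : Fin m → Fin (m+1))
      exact this
    · intro x hx
      have hy : (Fin.cons 0 x : Fin (m+1) → ℝ) ≠ 0 := by
        intro h
        apply hx
        funext j
        have := congrFun h j.succ
        simpa using this
      have := hH'.dotProduct_mulVec_pos hy
      simp only [star_trivial] at this ⊢
      have key : x ⬝ᵥ ((Matrix.of fun i j : Fin m => H' i.succ j.succ) *ᵥ x)
          = (Fin.cons 0 x : Fin (m+1) → ℝ) ⬝ᵥ (H' *ᵥ (Fin.cons 0 x)) := by
        simp [dotProduct, Matrix.mulVec, Fin.sum_univ_succ]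
      rw [key]
      exact this
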